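/- Let n ≥ 1, λ ∈ (0, 2π/n), P, Q ∈ π_n(𝕋) with c_P ≠ c_Q, F := P − Q, S := P_+·Q_− − P_−·Q_+, and T := F_+·(F^{*n})_− − F_−·(F^{*n})_+. If F ∈ D̄_n(λ) \ T̄_n(λ), then every zero of S on 𝕋 and every zero of T on 𝕋 is of even order. -/

import Mathlib

open Polynomial Complex Finset
open scoped Classical

noncomputable section

/-- `uexp t = e^{it}`. -/
def uexp (t : ℝ) : ℂ := Complex.exp (Complex.I * t)

/-- Angular distance between two angles, measured on the circle `ℝ / 2πℤ`. -/
def angDist (x y : ℝ) : ℝ := ‖((x - y : ℝ) : AddCircle (2 * Real.pi))‖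

/-- `polyOn n Ω` : polynomials of degree exactly `n` with all zeros in `Ω`. -/
def polyOn (n : ℕ) (Ω : Set ℂ) : Set (Polynomial ℂ) :=
  {P | P.natDegree = n ∧ ∀ z : ℂ, P.IsRoot z → z ∈ Ω}

/-- `polyLe n Ω` : nonzero polynomials of degree at most `n` with all zeros in `Ω`. -/
def polyLe (n : ℕ) (Ω : Set ℂ) : Set (Polynomial ℂ) :=
  {P | P ≠ 0 ∧ P.natDegree ≤ n ∧ ∀ z : ℂ, P.IsRoot z → z ∈ Ω}

/-- Suffridge's class `T̄_n(λ)`. -/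
def Tbar (n : ℕ) (lam : ℝ) : Set (Polynomial ℂ) :=
  {P | ∃ (a : ℂ) (θ : Fin n → ℝ), a ≠ 0 ∧
    P = C a * ∏ j, (X - C (uexp (θ j))) ∧
    ∀ j k, j ≠ k → lam ≤ angDist (θ j) (θ k)}

/-- Suffridge's class `T_n(λ)`. -/
def Tstrict (n : ℕ) (lam : ℝ) : Set (Polynomial ℂ) :=
  {P | ∃ (a : ℂ) (θ : Fin n → ℝ), a ≠ 0 ∧
    P = C a * ∏ j, (X - C (uexp (θ j))) ∧
    ∀ j k, j ≠ k → lam < angDist (θ j) (θ k)}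

/-- The quantity `e^{-inλ/2} F₊(z)/F₋(z)`. -/
def dQuot (n : ℕ) (lam : ℝ) (F : Polynomial ℂ) (z : ℂ) : ℂ :=
  uexp (-(n * lam) / 2) * F.eval (uexp (lam / 2) * z) / F.eval (uexp (-(lam / 2)) * z)

/-- The class `D̄_n(λ)` for `λ ∈ [0, 2π/n]`. -/
def Dbar (n : ℕ) (lam : ℝ) : Set (Polynomial ℂ) :=
  if lam = 0 then polyOn n {z | ‖z‖ ≤ 1}
  else if lam = 2 * Real.pi / n then
    {P | ∃ a b : ℂ, a ≠ 0 ∧ ‖b‖ ≤ 1 ∧ P = C a * (X ^ n - C b)}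
  else {P | P.natDegree = n ∧ ∀ z : ℂ, 1 < ‖z‖ → 0 < (dQuot n lam P z).im}

/-- The class `D_n(λ)` for `λ ∈ [0, 2π/n)`. -/
def Dset (n : ℕ) (lam : ℝ) : Set (Polynomial ℂ) :=
  Tstrict n lam ∪
    (if lam = 0 then polyOn n {z | ‖z‖ < 1}
     else {P | P.natDegree = n ∧ ∀ z : ℂ, 1 ≤ ‖z‖ → 0 < (dQuot n lam P z).im})

/-- `Q_n(λ; z) = ∏_{j=1}^n (1 + e^{i(2j-n-1)λ/2} z)`. -/
def Qpoly (n : ℕ) (lam : ℝ) : Polynomial ℂ :=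
  ∏ j ∈ Finset.range n, (1 + C (uexp ((2 * (j : ℝ) + 1 - n) * lam / 2)) * X)

/-- The coefficients `C_k^{(n)}(λ)` of `Q_n(λ; ·)`. -/
def Ccoef (n k : ℕ) (lam : ℝ) : ℂ := (Qpoly n lam).coeff k

/-- The Suffridge convolution `F *_λ G` of two degree-`n` polynomials. -/
def lamConv (n : ℕ) (lam : ℝ) (F G : Polynomial ℂ) : Polynomial ℂ :=
  ∑ k ∈ Finset.range (n + 1), C (F.coeff k * G.coeff k / Ccoef n k lam) * X ^ k

/-- `preOf n lam f = f * Q_n(λ;·) = ∑ C_k^{(n)}(λ) a_k z^k`; so `f` belongs to the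
pre-coefficient class `P𝒞_n(λ)` iff `preOf n lam f ∈ 𝒞_n(λ)`. -/
def preOf (n : ℕ) (lam : ℝ) (f : Polynomial ℂ) : Polynomial ℂ :=
  ∑ k ∈ Finset.range (n + 1), C (Ccoef n k lam * f.coeff k) * X ^ k

/-- Pre-extremal polynomials `a ∑_{k=0}^n b^k z^k`, `a ≠ 0`, `|b| = 1`. -/
def PreExtremal (n : ℕ) (f : Polynomial ℂ) : Prop :=
  ∃ a b : ℂ, a ≠ 0 ∧ ‖b‖ = 1 ∧
    f = C a * ∑ k ∈ Finset.range (n + 1), C (b ^ k) * X ^ k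

/-- The `n`-inverse `F^{*n}(z) = z^n conj (F (1/ conj z))`. -/
def nInv (n : ℕ) (F : Polynomial ℂ) : Polynomial ℂ :=
  (F.reflect n).map (starRingEnd ℂ)

/-- `F₊(z) = F(e^{iλ/2} z)` as a polynomial. -/
def plusPoly (lam : ℝ) (F : Polynomial ℂ) : Polynomial ℂ :=
  F.comp (C (uexp (lam / 2)) * X)

/-- `F₋(z) = F(e^{-iλ/2} z)` as a polynomial. -/
def minusPoly (lam : ℝ) (F : Polynomial ℂ) : Polynomial ℂ :=
  F.comp (C (uexp (-(lam / 2))) * X)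

/-- The operator `Δ_λ^n[F](z) = (F₊(z) - F₋(z)) / (2 i z sin(nλ/2))`, with
`Δ_0^n[F] = F'/n`. -/
def Delta (n : ℕ) (lam : ℝ) (F : Polynomial ℂ) : Polynomial ℂ :=
  if lam = 0 then C ((n : ℂ)⁻¹) * derivative F
  else C ((2 * Complex.I * (Real.sin (n * lam / 2) : ℂ))⁻¹) *
    (plusPoly lam F - minusPoly lam F).divX

/-- `P` and `Q` (of degree `n`, zeros on the unit circle) have strictly interspersed
zeros: they are coprime and their zeros alternate on the unit circle. -/
def StrictIntersp (n : ℕ) (P Q : Polynomial ℂ) : Prop :=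
  IsCoprime P Q ∧ ∃ (a b : ℂ) (θ φ : ℕ → ℝ), a ≠ 0 ∧ b ≠ 0 ∧
    P = C a * ∏ j ∈ Finset.range n, (X - C (uexp (θ j))) ∧
    Q = C b * ∏ j ∈ Finset.range n, (X - C (uexp (φ j))) ∧
    (∀ j, j < n → θ j < φ j) ∧
    (∀ j, j + 1 < n → φ j < θ (j + 1)) ∧
    (0 < n → φ (n - 1) < θ 0 + 2 * Real.pi)

/-- The Grace–Szegő convolution of two polynomials of degree ≤ n. -/
def GSconv (n : ℕ) (F G : Polynomial ℂ) : Polynomial ℂ :=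
  ∑ k ∈ Finset.range (n + 1), C (F.coeff k * G.coeff k / (n.choose k : ℂ)) * X ^ k

/-- `Ω_{τ,γ}` : the image of the unit disk under `z ↦ τz/(1+γz)`. -/
def OmegaSet (τ : ℂ) (γ : ℝ) : Set ℂ :=
  (fun z => τ * z / (1 + (γ : ℂ) * z)) '' Metric.ball 0 1

/-- `I_γ = {z : |z| + γ|1+z| < 1}`. -/
def Iset (γ : ℝ) : Set ℂ := {z | ‖z‖ + γ * ‖1 + z‖ < 1}

/-- `O_γ = {z : |z| - γ|1+z| > 1}`. -/
def Oset (γ : ℝ) : Set ℂ := {z | 1 < ‖z‖ - γ * ‖1 + z‖}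

end


noncomputable section StmtAux

lemma uexp_add (a b : ℝ) : uexp (a + b) = uexp a * uexp b := by
  simp [uexp, mul_add, Complex.exp_add]

lemma uexp_zero : uexp 0 = 1 := by simp [uexp]

lemma uexp_ne_zero (t : ℝ) : uexp t ≠ 0 := Complex.exp_ne_zero _

lemma abs_uexp (t : ℝ) : ‖uexp t‖ = 1 := by
  simp [uexp, Complex.norm_exp]

lemma conj_uexp (t : ℝ) : starRingEnd ℂ (uexp t) = uexp (-t) := by
  rw [uexp, ← Complex.exp_conj]
  simp [uexp]

lemma uexp_pow (t : ℝ) (k : ℕ) : uexp t ^ k = uexp (k * t) := by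
  rw [uexp, uexp, ← Complex.exp_nat_mul]
  push_cast
  ring_nf

lemma continuous_uexp : Continuous uexp :=
  Complex.continuous_exp.comp (continuous_const.mul Complex.continuous_ofReal)

lemma uexp_sub_uexp_neg (s : ℝ) : uexp s - uexp (-s) = 2 * Complex.I * (Real.sin s : ℂ) := by
  have h1 : uexp s = Complex.cos s + Complex.sin s * Complex.I := by
    rw [uexp, mul_comm, Complex.exp_mul_I]
  have h2 : uexp (-s) = Complex.cos s - Complex.sin s * Complex.I := by
    rw [uexp, mul_comm]
    push_cast
    rw [Complex.exp_mul_I, Complex.cos_neg, Complex.sin_neg]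
    ring
  rw [h1, h2, Complex.ofReal_sin]
  ring

lemma eval_map_conj (p : Polynomial ℂ) (z : ℂ) :
    (p.map (starRingEnd ℂ)).eval z = starRingEnd ℂ (p.eval (starRingEnd ℂ z)) := by
  rw [eval_map]
  conv_lhs => rw [show z = starRingEnd ℂ (starRingEnd ℂ z) from (Complex.conj_conj z).symm]
  exact eval₂_at_apply _ _

lemma eval_reflect {n : ℕ} (p : Polynomial ℂ) (hp : p.natDegree ≤ n) (z : ℂ) (hz : z ≠ 0) :
    (reflect n p).eval z = z ^ n * p.eval z⁻¹ := by
  have : Invertible (z⁻¹) := invertibleOfNonzero (inv_ne_zero hz)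
  have h := Polynomial.eval₂_reflect_mul_pow (RingHom.id ℂ) z⁻¹ n p hp
  rw [invOf_eq_inv, inv_inv] at h
  have h' : eval z (reflect n p) * z⁻¹ ^ n = eval z⁻¹ p := h
  clear h
  rw [eq_comm, ← h']
  field_simp
  rw [mul_comm (z ^ n), mul_assoc, ← mul_pow, mul_one_div_cancel hz, one_pow, mul_one]

lemma plusPoly_eval (lam : ℝ) (F : Polynomial ℂ) (z : ℂ) :
    (plusPoly lam F).eval z = F.eval (uexp (lam / 2) * z) := by
  simp [plusPoly, eval_comp]

lemma minusPoly_eval (lam : ℝ) (F : Polynomial ℂ) (z : ℂ) :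
    (minusPoly lam F).eval z = F.eval (uexp (-(lam / 2)) * z) := by
  simp [minusPoly, eval_comp]

lemma nInv_eval {n : ℕ} (F : Polynomial ℂ) (hF : F.natDegree ≤ n) (w : ℂ)
    (hw : ‖w‖ = 1) :
    (nInv n F).eval w = w ^ n * starRingEnd ℂ (F.eval w) := by
  have hw0 : w ≠ 0 := by
    intro h; rw [h] at hw; simp at hw
  have hcw : starRingEnd ℂ w = w⁻¹ := by
    rw [Complex.inv_def, Complex.normSq_eq_norm_sq, hw]
    simp
  have hcw0 : starRingEnd ℂ w ≠ 0 := by simp [hw0]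
  rw [nInv, eval_map_conj, eval_reflect F hF _ hcw0, hcw, inv_inv, map_mul, map_pow,
    map_inv₀, hcw, inv_inv]

lemma even_rootMult_of_nonneg (T : Polynomial ℂ) (nu : ℝ) (g : ℂ → ℝ)
    (hg0 : ∀ θ : ℝ, 0 ≤ g (uexp θ))
    (hId : ∀ θ : ℝ, T.eval (uexp θ) = uexp (nu * θ) * (2 * (g (uexp θ) : ℂ) * Complex.I))
    (z : ℂ) (hz : ‖z‖ = 1) : Even (rootMultiplicity z T) := by
  by_cases hT0 : T = 0
  · simp [hT0, rootMultiplicity_zero]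
  have hz0 : z ≠ 0 := by intro h; rw [h] at hz; simp at hz
  have hzarg : z = uexp z.arg := by
    conv_lhs => rw [← Complex.norm_mul_exp_arg_mul_I z]
    rw [hz, uexp, mul_comm Complex.I _]
    simp
  set θ₀ := z.arg with hθ₀
  set m := rootMultiplicity z T with hm
  by_contra hodd
  have hmodd : Odd m := Nat.not_even_iff_odd.mp hodd
  set G := T /ₘ (X - C z) ^ m with hGdef
  have hfact : (X - C z) ^ m * G = T := T.pow_mul_divByMonic_rootMultiplicity_eq z
  have hG : G.eval z ≠ 0 := eval_divByMonic_pow_rootMultiplicity_ne_zero z hT0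
  have hdiff : ∀ t : ℝ, uexp (θ₀ + t) - z
      = uexp θ₀ * uexp (t / 2) * (2 * Complex.I * (Real.sin (t / 2) : ℂ)) := by
    intro t
    have e1 : uexp θ₀ * uexp (t / 2) * uexp (t / 2) = uexp (θ₀ + t) := by
      rw [← uexp_add, ← uexp_add]; congr 1; ring
    have e2 : uexp θ₀ * uexp (t / 2) * uexp (-(t / 2)) = uexp θ₀ := by
      rw [← uexp_add, ← uexp_add]; congr 1; ring
    have h3 := uexp_sub_uexp_neg (t / 2)
    rw [← hzarg] at e1 e2 ⊢
    linear_combination e2 - e1 + z * uexp (t / 2) * h3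
  set ψ : ℝ → ℂ := fun t => uexp θ₀ ^ m * uexp (t / 2) ^ m * (2 * Complex.I) ^ m *
      G.eval (uexp (θ₀ + t)) / (uexp (nu * (θ₀ + t)) * (2 * Complex.I)) with hψ
  have hden : ∀ t : ℝ, uexp (nu * (θ₀ + t)) * (2 * Complex.I) ≠ 0 := fun t =>
    mul_ne_zero (uexp_ne_zero _) (by simp [Complex.I_ne_zero])
  have hkey : ∀ t : ℝ, (g (uexp (θ₀ + t)) : ℂ) = (Real.sin (t / 2) : ℂ) ^ m * ψ t := by
    intro t
    have E := hId (θ₀ + t)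
    rw [← hfact] at E
    simp only [eval_mul, eval_pow, eval_sub, eval_X, eval_C] at E
    rw [hdiff t] at E
    have hb : ψ t = uexp θ₀ ^ m * uexp (t / 2) ^ m * (2 * Complex.I) ^ m *
        G.eval (uexp (θ₀ + t)) / (uexp (nu * (θ₀ + t)) * (2 * Complex.I)) := rfl
    rw [hb, ← mul_div_assoc, eq_comm, div_eq_iff (hden t)]
    linear_combination E
  have hψ0 : ψ 0 ≠ 0 := by
    have hb : ψ 0 = uexp θ₀ ^ m * uexp (0 / 2) ^ m * (2 * Complex.I) ^ m *
        G.eval (uexp (θ₀ + 0)) / (uexp (nu * (θ₀ + 0)) * (2 * Complex.I)) := rfl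
    rw [hb]
    apply div_ne_zero _ (hden 0)
    apply mul_ne_zero (mul_ne_zero (mul_ne_zero (pow_ne_zero _ (uexp_ne_zero _))
      (pow_ne_zero _ (uexp_ne_zero _))) (pow_ne_zero _ (by simp [Complex.I_ne_zero])))
    rw [add_zero, ← hzarg]; exact hG
  have c1 : Continuous fun t : ℝ => uexp (t / 2) := by
    have e : (fun t : ℝ => uexp (t / 2)) = uexp ∘ (fun t : ℝ => t / 2) := rfl
    rw [e]; exact continuous_uexp.comp (continuous_id.div_const 2)
  have c2 : Continuous fun t : ℝ => G.eval (uexp (θ₀ + t)) := by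
    have e : (fun t : ℝ => G.eval (uexp (θ₀ + t)))
        = (fun w : ℂ => G.eval w) ∘ uexp ∘ (fun t : ℝ => θ₀ + t) := rfl
    rw [e]
    exact (Polynomial.continuous G).comp (continuous_uexp.comp (continuous_const.add continuous_id))
  have c3 : Continuous fun t : ℝ => uexp (nu * (θ₀ + t)) := by
    have e : (fun t : ℝ => uexp (nu * (θ₀ + t))) = uexp ∘ (fun t : ℝ => nu * (θ₀ + t)) := rfl
    rw [e]
    exact continuous_uexp.comp (continuous_const.mul (continuous_const.add continuous_id))
  have hψcont : Continuous ψ := by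
    rw [hψ]
    exact Continuous.div (((continuous_const.mul (c1.pow m)).mul continuous_const).mul c2)
      (c3.mul continuous_const) hden
  have hSc : IsClosed {w : ℂ | w.im = 0 ∧ 0 ≤ w.re} :=
    (isClosed_eq Complex.continuous_im continuous_const).inter
      (isClosed_le continuous_const Complex.continuous_re)
  have hSc' : IsClosed {w : ℂ | w.im = 0 ∧ w.re ≤ 0} :=
    (isClosed_eq Complex.continuous_im continuous_const).inter
      (isClosed_le Complex.continuous_re continuous_const)
  have hval : ∀ t : ℝ, Real.sin (t / 2) ≠ 0 →
      ψ t = ((g (uexp (θ₀ + t)) / (Real.sin (t / 2)) ^ m : ℝ) : ℂ) := by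
    intro t hs
    have hsc : ((Real.sin (t / 2) : ℂ)) ^ m ≠ 0 := pow_ne_zero _ (by exact_mod_cast hs)
    rw [Complex.ofReal_div, Complex.ofReal_pow, eq_div_iff hsc, hkey t]
    ring
  have hpos : ∀ t ∈ Set.Ioo (0 : ℝ) 1, (ψ t).im = 0 ∧ 0 ≤ (ψ t).re := by
    intro t ht
    have hs : 0 < Real.sin (t / 2) :=
      Real.sin_pos_of_pos_of_lt_pi (by linarith [ht.1])
        (by nlinarith [Real.pi_gt_three, ht.2])
    rw [hval t hs.ne']
    exact ⟨Complex.ofReal_im _, by rw [Complex.ofReal_re]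
                                   exact div_nonneg (hg0 _) (pow_nonneg hs.le _)⟩
  have hneg : ∀ t ∈ Set.Ioo (-1 : ℝ) 0, (ψ t).im = 0 ∧ (ψ t).re ≤ 0 := by
    intro t ht
    have hs : Real.sin (t / 2) < 0 :=
      Real.sin_neg_of_neg_of_neg_pi_lt (by linarith [ht.2])
        (by nlinarith [Real.pi_gt_three, ht.1])
    have hsp : Real.sin (t / 2) ^ m < 0 := hmodd.pow_neg hs
    rw [hval t hs.ne]
    exact ⟨Complex.ofReal_im _, by rw [Complex.ofReal_re]
                                   exact div_nonpos_of_nonneg_of_nonpos (hg0 _) hsp.le⟩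
  have ht1 : Filter.Tendsto ψ (nhdsWithin 0 (Set.Ioi 0)) (nhds (ψ 0)) :=
    (hψcont.tendsto 0).mono_left nhdsWithin_le_nhds
  have ht2 : Filter.Tendsto ψ (nhdsWithin 0 (Set.Iio 0)) (nhds (ψ 0)) :=
    (hψcont.tendsto 0).mono_left nhdsWithin_le_nhds
  have m1 : ψ 0 ∈ {w : ℂ | w.im = 0 ∧ 0 ≤ w.re} := by
    refine hSc.mem_of_tendsto ht1 ?_
    filter_upwards [Ioo_mem_nhdsGT_of_mem (by norm_num : (0:ℝ) ∈ Set.Ico (0:ℝ) 1)] with t ht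
    exact hpos t ht
  have m2 : ψ 0 ∈ {w : ℂ | w.im = 0 ∧ w.re ≤ 0} := by
    refine hSc'.mem_of_tendsto ht2 ?_
    filter_upwards [Ioo_mem_nhdsLT_of_mem (by norm_num : (0:ℝ) ∈ Set.Ioc (-1:ℝ) 0)] with t ht
    exact hneg t ht
  exact hψ0 (Complex.ext (le_antisymm m2.2 m1.2) m1.1)

lemma nInv_sub (n : ℕ) (F G : Polynomial ℂ) : nInv n (F - G) = nInv n F - nInv n G := by
  simp [nInv, reflect_sub, Polynomial.map_sub]

lemma nInv_C_mul (n : ℕ) (c : ℂ) (F : Polynomial ℂ) :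
    nInv n (C c * F) = C (starRingEnd ℂ c) * nInv n F := by
  simp [nInv, reflect_C_mul, Polynomial.map_mul, map_C]

lemma nInv_of_selfinv {n : ℕ} {P : Polynomial ℂ} {c : ℂ} (hc : ‖c‖ = 1)
    (h : nInv n (C c * P) = C c * P) : nInv n P = C (c ^ 2) * P := by
  rw [nInv_C_mul] at h
  have h1 : c * starRingEnd ℂ c = 1 := by
    rw [Complex.mul_conj, Complex.normSq_eq_norm_sq, hc]; norm_num
  calc nInv n P = C (c * starRingEnd ℂ c) * nInv n P := by rw [h1, map_one, one_mul]
    _ = C c * (C (starRingEnd ℂ c) * nInv n P) := by rw [map_mul]; ring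
    _ = C c * (C c * P) := by rw [h]
    _ = C (c ^ 2) * P := by rw [← mul_assoc, ← map_mul, sq]

def gfun (n : ℕ) (lam : ℝ) (F : Polynomial ℂ) (z : ℂ) : ℝ :=
  (uexp (-(n * lam) / 2) * F.eval (uexp (lam / 2) * z) *
    starRingEnd ℂ (F.eval (uexp (-(lam / 2)) * z))).im

lemma gfun_cont (n : ℕ) (lam : ℝ) (F : Polynomial ℂ) : Continuous (gfun n lam F) := by
  have e0 : gfun n lam F = Complex.im ∘ (fun z : ℂ => uexp (-(n * lam) / 2) *
      F.eval (uexp (lam / 2) * z) * starRingEnd ℂ (F.eval (uexp (-(lam / 2)) * z))) := rfl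
  rw [e0]
  refine Complex.continuous_im.comp ?_
  refine Continuous.mul (Continuous.mul continuous_const ?_) ?_
  · have e : (fun z : ℂ => F.eval (uexp (lam / 2) * z))
        = (fun w : ℂ => F.eval w) ∘ (fun z : ℂ => uexp (lam / 2) * z) := rfl
    rw [e]
    exact (Polynomial.continuous F).comp (continuous_const.mul continuous_id)
  · have e : (fun z : ℂ => starRingEnd ℂ (F.eval (uexp (-(lam / 2)) * z)))
        = (fun w : ℂ => starRingEnd ℂ w) ∘ (fun w : ℂ => F.eval w) ∘
          (fun z : ℂ => uexp (-(lam / 2)) * z) := rfl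
    rw [e]
    exact Complex.continuous_conj.comp
      ((Polynomial.continuous F).comp (continuous_const.mul continuous_id))

lemma gfun_pos (n : ℕ) (lam : ℝ) (F : Polynomial ℂ)
    (hIm : ∀ z : ℂ, 1 < ‖z‖ → 0 < (dQuot n lam F z).im)
    (z : ℂ) (hz : 1 < ‖z‖) : 0 < gfun n lam F z := by
  have hIm' := hIm z hz
  have hB : F.eval (uexp (-(lam / 2)) * z) ≠ 0 := by
    intro h
    rw [dQuot, h, div_zero] at hIm'
    simp at hIm'
  have hmc : uexp (-(n * lam) / 2) * F.eval (uexp (lam / 2) * z) *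
      starRingEnd ℂ (F.eval (uexp (-(lam / 2)) * z))
      = (Complex.normSq (F.eval (uexp (-(lam / 2)) * z)) : ℂ) * dQuot n lam F z := by
    rw [dQuot, ← Complex.mul_conj, mul_assoc, ← mul_div_assoc, eq_comm, div_eq_iff hB]
    ring
  rw [gfun, hmc, Complex.im_ofReal_mul]
  exact mul_pos (Complex.normSq_pos.mpr hB) hIm'

lemma gfun_nonneg (n : ℕ) (lam : ℝ) (F : Polynomial ℂ)
    (hIm : ∀ z : ℂ, 1 < ‖z‖ → 0 < (dQuot n lam F z).im)
    (w : ℂ) (hw : ‖w‖ = 1) : 0 ≤ gfun n lam F w := by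
  have hc : Continuous fun r : ℝ => gfun n lam F ((r : ℂ) * w) := by
    have e : (fun r : ℝ => gfun n lam F ((r : ℂ) * w))
        = gfun n lam F ∘ (fun r : ℝ => (r : ℂ) * w) := rfl
    rw [e]
    exact (gfun_cont n lam F).comp (Complex.continuous_ofReal.mul continuous_const)
  have htend : Filter.Tendsto (fun r : ℝ => gfun n lam F ((r : ℂ) * w))
      (nhdsWithin 1 (Set.Ioi 1)) (nhds (gfun n lam F w)) := by
    have h1 := hc.tendsto 1
    simp only [Complex.ofReal_one, one_mul] at h1
    exact h1.mono_left nhdsWithin_le_nhds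
  refine ge_of_tendsto htend ?_
  filter_upwards [self_mem_nhdsWithin] with r hr
  have hr1 : (1:ℝ) < r := Set.mem_Ioi.mp hr
  refine (gfun_pos n lam F hIm _ ?_).le
  rw [norm_mul, Complex.norm_real, hw, mul_one, Real.norm_eq_abs, abs_of_pos (by linarith)]
  exact hr1

lemma uexp_sq_inj {s t : ℝ} (hs : 0 ≤ s) (hs' : s < Real.pi) (ht : 0 ≤ t) (ht' : t < Real.pi)
    (h : uexp s ^ 2 = uexp t ^ 2) : s = t := by
  rw [uexp_pow, uexp_pow, uexp, uexp] at h
  obtain ⟨k, hk⟩ := Complex.exp_eq_exp_iff_exists_int.mp h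
  have him := congrArg Complex.im hk
  push_cast at him
  simp [Complex.mul_im, Complex.add_im] at him
  have hpi := Real.pi_pos
  have hk1 : (k:ℝ) * (2 * Real.pi) = 2 * s - 2 * t := by linarith
  have hkneg : (-1:ℝ) < (k:ℝ) := by nlinarith
  have hklt : (k:ℝ) < 1 := by nlinarith
  have hk0 : k = 0 := by
    have hb : -1 < k ∧ k < 1 := by exact_mod_cast And.intro hkneg hklt
    omega
  rw [hk0] at him
  push_cast at him
  linarith

end StmtAux

theorem stmt11 (n : ℕ) (hn : 1 ≤ n) (lam : ℝ) (h0 : 0 < lam) (h1 : lam < 2 * Real.pi / n)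
    (P Q : Polynomial ℂ)
    (hP : P ∈ polyOn n {z : ℂ | ‖z‖ = 1})
    (hQ : Q ∈ polyOn n {z : ℂ | ‖z‖ = 1})
    (cP cQ : ℂ) (tP tQ : ℝ)
    (htP : 0 ≤ tP ∧ tP < Real.pi) (hcP : cP = uexp tP)
    (hsP : nInv n (C cP * P) = C cP * P)
    (htQ : 0 ≤ tQ ∧ tQ < Real.pi) (hcQ : cQ = uexp tQ)
    (hsQ : nInv n (C cQ * Q) = C cQ * Q)
    (hcc : cP ≠ cQ)
    (F S T : Polynomial ℂ) (hF : F = P - Q)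
    (hS : S = plusPoly lam P * minusPoly lam Q - minusPoly lam P * plusPoly lam Q)
    (hT : T = plusPoly lam F * minusPoly lam (nInv n F) -
      minusPoly lam F * plusPoly lam (nInv n F))
    (hmem : F ∈ Dbar n lam \ Tbar n lam) :
    (∀ z : ℂ, ‖z‖ = 1 → S.IsRoot z → Even (rootMultiplicity z S)) ∧
    (∀ z : ℂ, ‖z‖ = 1 → T.IsRoot z → Even (rootMultiplicity z T)) := by
  have hlam0 : lam ≠ 0 := ne_of_gt h0
  have hlamn : lam ≠ 2 * Real.pi / n := ne_of_lt h1
  have hDb := hmem.1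
  simp only [Dbar, if_neg hlam0, if_neg hlamn, Set.mem_setOf_eq] at hDb
  obtain ⟨hFdeg, hIm⟩ := hDb
  have hPinv : nInv n P = C (cP ^ 2) * P :=
    nInv_of_selfinv (by rw [hcP]; exact abs_uexp tP) hsP
  have hQinv : nInv n Q = C (cQ ^ 2) * Q :=
    nInv_of_selfinv (by rw [hcQ]; exact abs_uexp tQ) hsQ
  have hsq : cP ^ 2 ≠ cQ ^ 2 := by
    intro h
    apply hcc
    rw [hcP, hcQ] at h ⊢
    rw [uexp_sq_inj htP.1 htP.2 htQ.1 htQ.2 h]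
  have hTS : T = C (cP ^ 2 - cQ ^ 2) * S := by
    rw [hT, hS, hF, nInv_sub, hPinv, hQinv]
    simp only [plusPoly, minusPoly, sub_comp, mul_comp, C_comp, map_sub]
    ring
  have hId : ∀ θ : ℝ, T.eval (uexp θ)
      = uexp ((n : ℝ) * θ) * (2 * (gfun n lam F (uexp θ) : ℂ) * Complex.I) := by
    intro θ
    have h1 : ‖uexp (lam / 2) * uexp θ‖ = 1 := by
      rw [norm_mul, abs_uexp, abs_uexp, mul_one]
    have h2 : ‖uexp (-(lam / 2)) * uexp θ‖ = 1 := by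
      rw [norm_mul, abs_uexp, abs_uexp, mul_one]
    rw [hT]
    simp only [eval_sub, eval_mul, plusPoly_eval, minusPoly_eval]
    rw [nInv_eval F hFdeg.le _ h2, nInv_eval F hFdeg.le _ h1]
    have e1 : (uexp (-(lam / 2)) * uexp θ) ^ n = uexp (-((n : ℝ) * lam) / 2) * uexp ((n : ℝ) * θ) := by
      rw [← uexp_add, uexp_pow, ← uexp_add]
      congr 1
      ring
    have e2 : (uexp (lam / 2) * uexp θ) ^ n = uexp (((n : ℝ) * lam) / 2) * uexp ((n : ℝ) * θ) := by
      rw [← uexp_add, uexp_pow, ← uexp_add]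
      congr 1
      ring
    rw [e1, e2]
    have hconj : starRingEnd ℂ (uexp (-((n : ℝ) * lam) / 2) * F.eval (uexp (lam / 2) * uexp θ) *
        starRingEnd ℂ (F.eval (uexp (-(lam / 2)) * uexp θ)))
        = uexp (((n : ℝ) * lam) / 2) * F.eval (uexp (-(lam / 2)) * uexp θ) *
          starRingEnd ℂ (F.eval (uexp (lam / 2) * uexp θ)) := by
      rw [map_mul, map_mul, Complex.conj_conj, conj_uexp,
        show -(-((n : ℝ) * lam) / 2) = ((n : ℝ) * lam) / 2 from by ring]
      ring
    have hsub := Complex.sub_conj (uexp (-((n : ℝ) * lam) / 2) * F.eval (uexp (lam / 2) * uexp θ) *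
        starRingEnd ℂ (F.eval (uexp (-(lam / 2)) * uexp θ)))
    push_cast at hsub
    have hgdef : (gfun n lam F (uexp θ) : ℂ)
        = ((uexp (-((n : ℝ) * lam) / 2) * F.eval (uexp (lam / 2) * uexp θ) *
          starRingEnd ℂ (F.eval (uexp (-(lam / 2)) * uexp θ))).im : ℂ) := rfl
    rw [hgdef]
    linear_combination uexp ((n : ℝ) * θ) * hsub + uexp ((n : ℝ) * θ) * hconj
  have hTeven : ∀ z : ℂ, ‖z‖ = 1 → Even (rootMultiplicity z T) :=
    fun z hz => even_rootMult_of_nonneg T (n : ℝ) (gfun n lam F)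
      (fun θ => gfun_nonneg n lam F hIm _ (abs_uexp θ)) hId z hz
  refine ⟨?_, fun z hz _ => hTeven z hz⟩
  intro z hz _
  by_cases hS0 : S = 0
  · rw [hS0, rootMultiplicity_zero]
    exact Even.zero
  · have h := hTeven z hz
    rw [hTS, rootMultiplicity_mul (mul_ne_zero (C_ne_zero.mpr (sub_ne_zero.mpr hsq)) hS0),
      rootMultiplicity_C, zero_add] at h
    exact h
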